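/- Let G be a graph on vertices v₁,...,v_n with a linear arrangement of width at most b, n a multiple of b, and blocks B₀,...,B_{k-1} as above. Define f₀ : V → ℝ by f₀(v) = i·n for v ∈ B_i, and let I₀ be the graph where u ~ w iff u ≠ w and |f₀(u) - f₀(w)| ≤ n. Then I₀ is an indifference-graph supergraph of G: E(G) ⊆ E(I₀). -/
import Mathlib


/-- With the block decomposition of a width-`b` arrangement and `f₀ v = (block of v)·n`,
the indifference graph `I₀` with `u ~ w ↔ u ≠ w ∧ |f₀ u - f₀ w| ≤ n` is a supergraph
of `G`. -/
theorem stmt11 (n b : ℕ) (hb : 1 ≤ b) (hdvd : b ∣ n) (G : SimpleGraph (Fin n))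
    (hwidth : ∀ u v : Fin n, G.Adj u v → (u : ℕ) ≤ (v : ℕ) → (v : ℕ) - (u : ℕ) ≤ b)
    (f₀ : Fin n → ℝ) (hf : ∀ v : Fin n, f₀ v = (((v : ℕ) / b : ℕ) : ℝ) * n) :
    G ≤ SimpleGraph.fromRel (fun u w => |f₀ u - f₀ w| ≤ (n : ℝ)) := by
  intro u w huw
  have key : ∀ x y : Fin n, G.Adj x y → (x : ℕ) ≤ (y : ℕ) → |f₀ x - f₀ y| ≤ (n : ℝ) := by
    intro x y hxy hle
    have h1 : (y : ℕ) - (x : ℕ) ≤ b := hwidth x y hxy hle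
    have h2 : (y : ℕ) ≤ (x : ℕ) + b := by omega
    have hdivle : (x : ℕ) / b ≤ (y : ℕ) / b := Nat.div_le_div_right hle
    have hdivlt : (y : ℕ) / b ≤ (x : ℕ) / b + 1 := by
      calc (y : ℕ) / b ≤ ((x : ℕ) + b) / b := Nat.div_le_div_right h2
        _ = (x : ℕ) / b + 1 := by
            rw [Nat.add_div_right _ (by omega : 0 < b)]
    rw [hf x, hf y, abs_sub_comm, ← sub_mul, abs_mul, abs_of_nonneg (by positivity : (0:ℝ) ≤ (n:ℕ))]
    have : |((((y : ℕ)/b : ℕ)) : ℝ) - (((x : ℕ)/b : ℕ) : ℝ)| ≤ 1 := by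
      rw [abs_of_nonneg (sub_nonneg.mpr (Nat.cast_le.mpr hdivle))]
      have : ((((y : ℕ)/b : ℕ)) : ℝ) ≤ (((x : ℕ)/b : ℕ) : ℝ) + 1 := by
        exact_mod_cast hdivlt
      linarith
    nlinarith [Nat.cast_nonneg (α := ℝ) n]
  refine SimpleGraph.fromRel_adj _ u w |>.mpr ⟨huw.ne, ?_⟩
  rcases le_total (u : ℕ) (w : ℕ) with h | h
  · exact Or.inl (key u w huw h)
  · exact Or.inr (key w u huw.symm h)
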